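/- Let μ, b₁, b₂ ∈ ℝ, σ > 0, Λ ≥ 0, and let M ~ N(μ, σ²). Then E[e^{b₁ + b₂M} exp(−Λ e^{b₁ + b₂M})] = e^{b₁ + b₂μ + b₂²σ²/2} · ∫ exp(−Λ e^{b₂²σ² + b₁ + b₂m}) dN(μ, σ²)(m). Consequently, the marginal hazard of a failure time whose conditional survival given M = m is exp(−Λ(t) e^{b₁ + b₂m}) equals the baseline hazard times e^{b₁ + b₂μ + b₂²σ²/2} · r(Λ(t)), where r(Λ) = [∫ exp(−Λ e^{b₂²σ² + b₁ + b₂m}) dN(μ, σ²)(m)] / [∫ exp(−Λ e^{b₁ + b₂m}) dN(μ, σ²)(m)]. -/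

import Mathlib

open MeasureTheory ProbabilityTheory Real

/-- For `M ~ N(μ, σ²)`, `Λ ≥ 0`, and linear predictor `b₁ + b₂ m`,
`E[e^{b₁ + b₂ M} exp(−Λ e^{b₁ + b₂ M})]
  = e^{b₁ + b₂ μ + b₂²σ²/2} ∫ exp(−Λ e^{b₂²σ² + b₁ + b₂ m}) dN(μ, σ²)(m)`.
Consequently, the marginal hazard of a failure time whose conditional survival given
`M = m` is `exp(−Λ(t) e^{b₁ + b₂ m})` equals the baseline hazard times
`e^{b₁ + b₂ μ + b₂²σ²/2} · r(Λ(t))`, where `r(Λ)` is the ratio of the tilted and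
untilted Gaussian survival integrals; i.e. the ratio of the two Gaussian integrals
defining the marginal hazard factor equals `e^{b₁ + b₂ μ + b₂²σ²/2} · r(Λ)`. -/
theorem stmt_14 (μ b₁ b₂ σ Λ : ℝ) (hσ : 0 < σ) (hΛ : 0 ≤ Λ)
    (ν : Measure ℝ) (hν : ν = gaussianReal μ ⟨σ ^ 2, sq_nonneg σ⟩)
    (r : ℝ → ℝ)
    (hr : r = fun L =>
      (∫ m, exp (-(L * exp (b₂ ^ 2 * σ ^ 2 + b₁ + b₂ * m))) ∂ν)
        / (∫ m, exp (-(L * exp (b₁ + b₂ * m))) ∂ν)) :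
    (∫ m, exp (b₁ + b₂ * m) * exp (-(Λ * exp (b₁ + b₂ * m))) ∂ν
        = exp (b₁ + b₂ * μ + b₂ ^ 2 * σ ^ 2 / 2)
          * ∫ m, exp (-(Λ * exp (b₂ ^ 2 * σ ^ 2 + b₁ + b₂ * m))) ∂ν) ∧
    ((∫ m, exp (b₁ + b₂ * m) * exp (-(Λ * exp (b₁ + b₂ * m))) ∂ν)
        / (∫ m, exp (-(Λ * exp (b₁ + b₂ * m))) ∂ν)
      = exp (b₁ + b₂ * μ + b₂ ^ 2 * σ ^ 2 / 2) * r Λ) := by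
  have hσ2 : (σ : ℝ) ^ 2 ≠ 0 := (pow_pos hσ 2).ne'
  set v : NNReal := ⟨σ ^ 2, sq_nonneg σ⟩ with hvdef
  have hv0 : v ≠ 0 := by
    intro h
    exact hσ2 (congrArg (fun x : NNReal => (x : ℝ)) h)
  have hvcoe : ((v : NNReal) : ℝ) = σ ^ 2 := rfl
  have hmeas : Measurable fun x => (gaussianPDFReal μ v x).toNNReal :=
    (measurable_gaussianPDFReal μ v).real_toNNReal
  have hdens : ν = volume.withDensity
      (fun x => ((gaussianPDFReal μ v x).toNNReal : ENNReal)) := by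
    rw [hν, gaussianReal_of_var_ne_zero _ hv0]
    rfl
  have key : ∀ G : ℝ → ℝ, (∫ m, G m ∂ν) = ∫ m, gaussianPDFReal μ v m * G m := by
    intro G
    rw [hdens, integral_withDensity_eq_integral_smul hmeas]
    congr 1
    ext m
    simp [NNReal.smul_def, Real.coe_toNNReal _ (gaussianPDFReal_nonneg μ v m)]
  set C : ℝ := b₁ + b₂ * μ + b₂ ^ 2 * σ ^ 2 / 2 with hC
  have hpt : ∀ m : ℝ, gaussianPDFReal μ v m * exp (b₁ + b₂ * m)
      = exp C * gaussianPDFReal μ v (m - b₂ * σ ^ 2) := by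
    intro m
    have hexp : exp (-(m - μ) ^ 2 / (2 * σ ^ 2)) * exp (b₁ + b₂ * m)
        = exp C * exp (-(m - b₂ * σ ^ 2 - μ) ^ 2 / (2 * σ ^ 2)) := by
      rw [← exp_add, ← exp_add]
      congr 1
      rw [hC]
      field_simp
      ring
    simp only [gaussianPDFReal, hvcoe]
    rw [mul_assoc, hexp]
    ring
  have h1 : ∫ m, exp (b₁ + b₂ * m) * exp (-(Λ * exp (b₁ + b₂ * m))) ∂ν
      = exp C * ∫ m, exp (-(Λ * exp (b₂ ^ 2 * σ ^ 2 + b₁ + b₂ * m))) ∂ν := by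
    rw [key, key, ← integral_const_mul]
    have hcov := integral_add_right_eq_self (μ := volume)
      (fun m => exp C * (gaussianPDFReal μ v (m - b₂ * σ ^ 2)
        * exp (-(Λ * exp (b₁ + b₂ * m))))) (b₂ * σ ^ 2)
    have hrhs : (fun m => exp C * (gaussianPDFReal μ v m
        * exp (-(Λ * exp (b₂ ^ 2 * σ ^ 2 + b₁ + b₂ * m)))))
        = fun m => exp C * (gaussianPDFReal μ v (m + b₂ * σ ^ 2 - b₂ * σ ^ 2)
          * exp (-(Λ * exp (b₁ + b₂ * (m + b₂ * σ ^ 2))))) := by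
      funext m
      ring_nf
    rw [hrhs]
    rw [show (∫ m, exp C * (gaussianPDFReal μ v (m + b₂ * σ ^ 2 - b₂ * σ ^ 2)
        * exp (-(Λ * exp (b₁ + b₂ * (m + b₂ * σ ^ 2))))))
        = ∫ m, exp C * (gaussianPDFReal μ v (m - b₂ * σ ^ 2)
          * exp (-(Λ * exp (b₁ + b₂ * m)))) from hcov]
    congr 1
    funext m
    rw [← mul_assoc, hpt m, mul_assoc]
  refine ⟨h1, ?_⟩
  rw [h1, hr, mul_div_assoc]
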